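/- Let Γ be a Fuchsian group and let ℰ be its set of elliptic fixed points in ℍ. Suppose z, w ∈ ℰ realize the minimal distance between distinct points of ℰ. Let A, B ∈ Γ be primitive elliptic elements fixing z and w with rotation angles φ and θ respectively, θ ≤ φ. Then 2cosh(ρ(z,w)/2) ≥ 1/|sin(θ/2)|. -/

import Mathlib

open Matrix UpperHalfPlane Real

abbrev SL2R := Matrix.SpecialLinearGroup (Fin 2) ℝ

/-- `γ` is an elliptic Möbius transformation with fixed point `v` and rotation angle `θ`:
it fixes `v` and, when conjugated by an element of PSL(2,ℝ) sending `v` to `i`, it acts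
as the rotation by `θ` about `i`, represented by the matrix
`[[cos(θ/2), sin(θ/2)], [-sin(θ/2), cos(θ/2)]]`. -/
def HasRotation (γ : SL2R) (v : UpperHalfPlane) (θ : ℝ) : Prop :=
  γ • v = v ∧
  ∃ g R : SL2R, g • v = UpperHalfPlane.I ∧
    (R : Matrix (Fin 2) (Fin 2) ℝ) =
      !![Real.cos (θ / 2), Real.sin (θ / 2); -Real.sin (θ / 2), Real.cos (θ / 2)] ∧
    ∀ z : UpperHalfPlane, (g * γ * g⁻¹) • z = R • z

/-- The set of elliptic fixed points of `Γ` in ℍ: points fixed by some (nontrivial)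
elliptic element of `Γ` (an element of SL(2,ℝ) with |trace| < 2). -/
def EllipticFixedPoints (Γ : Subgroup SL2R) : Set UpperHalfPlane :=
  {z | ∃ γ ∈ Γ, |Matrix.trace ((γ : SL2R) : Matrix (Fin 2) (Fin 2) ℝ)| < 2 ∧ γ • z = z}

/-! ### Auxiliary lemmas -/

lemma smul_coe' (g : SL2R) (u : ℍ) :
    (↑(g • u) : ℂ) = ((g 0 0 : ℝ) * u + g 0 1) / ((g 1 0 : ℝ) * u + g 1 1) := by
  rw [UpperHalfPlane.specialLinearGroup_apply]
  simp

lemma den_ne (a b : ℝ) (u : ℍ) (hab : ¬(a = 0 ∧ b = 0)) : (a * (u:ℂ) + b) ≠ 0 := by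
  intro h
  have him := congrArg Complex.im h
  have hre := congrArg Complex.re h
  simp [Complex.add_im, Complex.mul_im, Complex.add_re, Complex.mul_re] at him hre
  have ha : a = 0 := by
    rcases him with h | h
    · exact h
    · exact absurd h u.im_ne_zero
  exact hab ⟨ha, by simpa [ha] using hre⟩

lemma rot_coe (c s : ℝ) (R : SL2R)
    (hR : (R : Matrix (Fin 2) (Fin 2) ℝ) = !![c, s; -s, c]) (u : ℍ) :
    (↑(R • u) : ℂ) = ((c : ℂ) * u + s) / (-(s:ℂ) * u + c) := by
  have h0 : R 0 0 = c := by
    rw [show (R 0 0 : ℝ) = (R : Matrix (Fin 2) (Fin 2) ℝ) 0 0 from rfl, hR]; simp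
  have h1 : R 0 1 = s := by
    rw [show (R 0 1 : ℝ) = (R : Matrix (Fin 2) (Fin 2) ℝ) 0 1 from rfl, hR]; simp
  have h2 : R 1 0 = -s := by
    rw [show (R 1 0 : ℝ) = (R : Matrix (Fin 2) (Fin 2) ℝ) 1 0 from rfl, hR]; simp
  have h3 : R 1 1 = c := by
    rw [show (R 1 1 : ℝ) = (R : Matrix (Fin 2) (Fin 2) ℝ) 1 1 from rfl, hR]; simp
  rw [smul_coe', h0, h1, h2, h3]
  push_cast
  ring_nf

lemma rot_det (c s : ℝ) (R : SL2R)
    (hR : (R : Matrix (Fin 2) (Fin 2) ℝ) = !![c, s; -s, c]) : c ^ 2 + s ^ 2 = 1 := by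
  have := R.2
  rw [hR, Matrix.det_fin_two_of] at this
  nlinarith [this]

lemma rot_fixed (c s : ℝ) (hs : s ≠ 0) (u : ℍ)
    (hcoe : (↑u : ℂ) = ((c : ℂ) * u + s) / (-(s:ℂ) * u + c)) : u = I := by
  have hd : (-(s:ℂ) * u + c) ≠ 0 := by
    have := den_ne (-s) c u (by rintro ⟨h, _⟩; exact hs (by linarith [neg_eq_zero.mp h]))
    simpa using this
  rw [eq_div_iff hd] at hcoe
  have h1 : (s:ℂ) * (u:ℂ)^2 + s = 0 := by linear_combination -hcoe
  have h2 : (s:ℂ) * ((u:ℂ) - Complex.I) * ((u:ℂ) + Complex.I) = 0 := by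
    linear_combination h1 - (s:ℂ) * Complex.I_sq
  have hs' : (s : ℂ) ≠ 0 := by exact_mod_cast hs
  rcases mul_eq_zero.mp h2 with h | h
  · rcases mul_eq_zero.mp h with h | h
    · exact absurd h hs'
    · have : (u : ℂ) = Complex.I := by linear_combination h
      exact UpperHalfPlane.ext (by rw [this]; rfl)
  · exfalso
    have him : (u : ℂ).im + 1 = 0 := by
      have := congrArg Complex.im h
      simpa using this
    have := u.im_pos
    rw [UpperHalfPlane.im] at this
    linarith

lemma sinh_dist_I (u : ℍ) :
    Real.sinh (dist u I) = ‖(u:ℂ)^2 + 1‖ / (2 * u.im) := by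
  have h2 : dist u I = 2 * (dist u I / 2) := by ring
  rw [h2, Real.sinh_two_mul, UpperHalfPlane.sinh_half_dist, UpperHalfPlane.cosh_half_dist]
  have hI : (I : ℂ) = Complex.I := rfl
  have hIim : (I : ℍ).im = 1 := rfl
  rw [hI, hIim, mul_one]
  have him : 0 < u.im := u.im_pos
  have hc : (starRingEnd ℂ) Complex.I = -Complex.I := Complex.conj_I
  rw [hc]
  rw [Complex.dist_eq, Complex.dist_eq, sub_neg_eq_add]
  have habs : ‖(u:ℂ) - Complex.I‖ * ‖(u:ℂ) + Complex.I‖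
      = ‖(u:ℂ)^2 + 1‖ := by
    rw [← norm_mul]
    congr 1
    linear_combination -Complex.I_sq
  have hsq : Real.sqrt u.im * Real.sqrt u.im = u.im := Real.mul_self_sqrt him.le
  field_simp
  linear_combination u.im * habs - ‖(u:ℂ)^2 + 1‖ * hsq

lemma rot_displacement (c s : ℝ) (hs : s ≠ 0) (R : SL2R)
    (hR : (R : Matrix (Fin 2) (Fin 2) ℝ) = !![c, s; -s, c]) (u : ℍ) :
    Real.sinh (dist u (R • u) / 2) = |s| * Real.sinh (dist u I) := by
  have hcs := rot_det c s R hR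
  have hcoe := rot_coe c s R hR u
  rw [sinh_dist_I]
  set Ru : ℍ := R • u with hRu
  set δ : ℂ := -(s:ℂ) * u + c with hδdef
  have hδ : δ ≠ 0 := by
    have := den_ne (-s) c u (by rintro ⟨h, _⟩; exact hs (by linarith [neg_eq_zero.mp h]))
    simpa [hδdef] using this
  have haδ : 0 < ‖δ‖ := norm_pos_iff.mpr hδ
  have him : Ru.im = u.im / Complex.normSq δ := by
    rw [show Ru.im = (Ru : ℂ).im from rfl, hcoe, Complex.div_im]
    have h1 : ((c:ℂ) * u + s).im = c * u.im := by
      simp [Complex.add_im, Complex.mul_im]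
    have h2 : ((c:ℂ) * u + s).re = c * u.re + s := by
      simp [Complex.add_re, Complex.mul_re]
    have h3 : δ.re = -s * u.re + c := by
      simp [hδdef, Complex.add_re, Complex.mul_re]
    have h4 : δ.im = -s * u.im := by
      simp [hδdef, Complex.add_im, Complex.mul_im]
    have hn : Complex.normSq δ ≠ 0 := by
      simpa using Complex.normSq_pos.mpr hδ |>.ne'
    rw [h1, h2, h3, h4]
    field_simp
    linear_combination hcs
  have hsub : (u:ℂ) - ((c : ℂ) * u + s) / δ = (-(s:ℂ)) * ((u:ℂ)^2 + 1) / δ := by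
    rw [eq_div_iff hδ, sub_mul, div_mul_cancel₀ _ hδ, hδdef]
    ring
  have habs : dist (u:ℂ) (Ru:ℂ) = |s| * ‖(u:ℂ)^2+1‖ / ‖δ‖ := by
    rw [Complex.dist_eq, hcoe, hsub, norm_div, norm_mul, norm_neg,
      Complex.norm_real, Real.norm_eq_abs]
  have hsqrt : Real.sqrt (u.im * Ru.im) = u.im / ‖δ‖ := by
    rw [him, Complex.normSq_eq_norm_sq]
    rw [show u.im * (u.im / ‖δ‖ ^ 2) = (u.im / ‖δ‖)^2 by ring]
    exact Real.sqrt_sq (by positivity)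
  rw [UpperHalfPlane.sinh_half_dist, habs, hsqrt]
  have hy : (0:ℝ) < u.im := u.im_pos
  field_simp

lemma acts_trivially (M : SL2R) (h : ∀ u : ℍ, M • u = u) : M = 1 ∨ M = -1 := by
  have hdet := M.2
  rw [Matrix.det_fin_two] at hdet
  have hden : ¬(M 1 0 = 0 ∧ M 1 1 = 0) := by
    rintro ⟨hc, hd⟩
    rw [show ((M : Matrix (Fin 2) (Fin 2) ℝ)) 1 0 = M 1 0 from rfl] at hdet
    rw [show ((M : Matrix (Fin 2) (Fin 2) ℝ)) 1 1 = M 1 1 from rfl] at hdet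
    rw [hc, hd] at hdet
    simp at hdet
  have key : ∀ u : ℍ, (M 0 0 : ℂ) * u + M 0 1 = (u:ℂ) * ((M 1 0 : ℂ) * u + M 1 1) := by
    intro u
    have h2 := congrArg (UpperHalfPlane.coe) (h u)
    rw [smul_coe', div_eq_iff (den_ne _ _ u hden)] at h2
    exact h2
  set z₂ : ℍ := ⟨2 * Complex.I, by simp⟩ with hz₂
  have k1 := key I
  have k2 := key z₂
  rw [show ((I : ℍ) : ℂ) = Complex.I from rfl, Complex.ext_iff] at k1
  rw [show ((z₂ : ℍ) : ℂ) = 2 * Complex.I from rfl, Complex.ext_iff] at k2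
  simp [Complex.add_re, Complex.add_im, Complex.mul_re, Complex.mul_im] at k1 k2
  obtain ⟨hb1, ha1⟩ := k1
  obtain ⟨hb2, ha2⟩ := k2
  have hc0 : M 1 0 = 0 := by linarith
  have hb0 : M 0 1 = 0 := by linarith
  have had : M 0 0 = M 1 1 := by linarith
  have ha2' : M 0 0 * M 0 0 = 1 := by
    rw [show ((M : Matrix (Fin 2) (Fin 2) ℝ)) 0 0 = M 0 0 from rfl,
      show ((M : Matrix (Fin 2) (Fin 2) ℝ)) 0 1 = M 0 1 from rfl,
      show ((M : Matrix (Fin 2) (Fin 2) ℝ)) 1 0 = M 1 0 from rfl,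
      show ((M : Matrix (Fin 2) (Fin 2) ℝ)) 1 1 = M 1 1 from rfl] at hdet
    rw [hb0, hc0, ← had] at hdet
    linarith
  rcases mul_self_eq_one_iff.mp ha2' with ha | ha
  · left
    apply Subtype.ext
    ext i j
    fin_cases i <;> fin_cases j <;>
      simp [show ∀ i j, ((M : Matrix (Fin 2) (Fin 2) ℝ)) i j = M i j from fun _ _ => rfl,
        ha, hb0, hc0, had.symm.trans ha, Matrix.one_apply]
  · right
    apply Subtype.ext
    ext i j
    fin_cases i <;> fin_cases j <;>
      simp [show ∀ i j, ((M : Matrix (Fin 2) (Fin 2) ℝ)) i j = M i j from fun _ _ => rfl,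
        ha, hb0, hc0, had.symm.trans ha, Matrix.one_apply]

lemma act_eq_up_to_sign (M N : SL2R) (h : ∀ u : ℍ, M • u = N • u) : M = N ∨ M = -N := by
  have h2 : ∀ u : ℍ, (N⁻¹ * M) • u = u := by
    intro u
    rw [mul_smul, h, inv_smul_smul]
  rcases acts_trivially _ h2 with h3 | h3
  · left
    calc M = N * (N⁻¹ * M) := by group
      _ = N * 1 := by rw [h3]
      _ = N := by group
  · right
    calc M = N * (N⁻¹ * M) := by group
      _ = N * (-1) := by rw [h3]
      _ = -N := by simp

lemma trace_conj (g A : SL2R) :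
    Matrix.trace ((g * A * g⁻¹ : SL2R) : Matrix (Fin 2) (Fin 2) ℝ)
      = Matrix.trace ((A : SL2R) : Matrix (Fin 2) (Fin 2) ℝ) := by
  have h1 : ((g * A * g⁻¹ : SL2R) : Matrix (Fin 2) (Fin 2) ℝ)
      = ((g : Matrix (Fin 2) (Fin 2) ℝ) * A) * (g⁻¹ : SL2R) := by simp
  rw [h1, Matrix.trace_mul_comm, ← mul_assoc]
  have h2 : ((g⁻¹ : SL2R) : Matrix (Fin 2) (Fin 2) ℝ) * g = 1 := by
    rw [← Matrix.SpecialLinearGroup.coe_mul, inv_mul_cancel]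
    simp
  rw [h2, one_mul]

theorem stmt10 (Γ : Subgroup SL2R) (hdisc : DiscreteTopology
      ((fun γ : SL2R => (γ : Matrix (Fin 2) (Fin 2) ℝ)) '' (Γ : Set SL2R)))
    (z w : UpperHalfPlane)
    (hz : z ∈ EllipticFixedPoints Γ) (hw : w ∈ EllipticFixedPoints Γ) (hzw : z ≠ w)
    (hmin : ∀ z' ∈ EllipticFixedPoints Γ, ∀ w' ∈ EllipticFixedPoints Γ,
      z' ≠ w' → dist z w ≤ dist z' w')
    (A B : SL2R) (hAΓ : A ∈ Γ) (hBΓ : B ∈ Γ) (φ θ : ℝ)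
    (hA : HasRotation A z φ) (hB : HasRotation B w θ)
    (hθ : 0 < θ) (hφ : φ ≤ Real.pi) (hθφ : θ ≤ φ) :
    2 * Real.cosh (dist z w / 2) ≥ 1 / |Real.sin (θ / 2)| := by
  obtain ⟨hAz, gA, RA, hgAz, hRA, hactA⟩ := hA
  obtain ⟨hBw, g, R, hgw, hR, hact⟩ := hB
  have hπ := Real.pi_pos
  have hφ0 : 0 < φ := lt_of_lt_of_le hθ hθφ
  -- sin values are positive
  have hsθ : 0 < Real.sin (θ / 2) :=
    Real.sin_pos_of_pos_of_lt_pi (by linarith) (by linarith)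
  have hsφ : 0 < Real.sin (φ / 2) :=
    Real.sin_pos_of_pos_of_lt_pi (by linarith) (by linarith)
  -- |trace A| < 2
  have htrA : |Matrix.trace ((A : SL2R) : Matrix (Fin 2) (Fin 2) ℝ)| < 2 := by
    rcases act_eq_up_to_sign (gA * A * gA⁻¹) RA hactA with hM | hM
    · rw [← trace_conj gA A, hM, hRA, Matrix.trace_fin_two_of]
      have h1 : Real.cos (φ/2) ^ 2 < 1 := by
        nlinarith [Real.sin_sq_add_cos_sq (φ/2)]
      have h2 : |Real.cos (φ/2)| < 1 := (sq_lt_one_iff_abs_lt_one _).mp h1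
      calc |Real.cos (φ/2) + Real.cos (φ/2)| = 2 * |Real.cos (φ/2)| := by
            rw [← two_mul, abs_mul]; norm_num
        _ < 2 := by linarith
    · rw [← trace_conj gA A, hM]
      have hneg : ((-RA : SL2R) : Matrix (Fin 2) (Fin 2) ℝ) = -(RA : Matrix (Fin 2) (Fin 2) ℝ) := by
        simp
      rw [hneg, Matrix.trace_neg, abs_neg, hRA, Matrix.trace_fin_two_of]
      have h1 : Real.cos (φ/2) ^ 2 < 1 := by
        nlinarith [Real.sin_sq_add_cos_sq (φ/2)]
      have h2 : |Real.cos (φ/2)| < 1 := (sq_lt_one_iff_abs_lt_one _).mp h1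
      calc |Real.cos (φ/2) + Real.cos (φ/2)| = 2 * |Real.cos (φ/2)| := by
            rw [← two_mul, abs_mul]; norm_num
        _ < 2 := by linarith
  -- the point p = B • z is an elliptic fixed point
  set p : ℍ := B • z with hp
  have hpE : p ∈ EllipticFixedPoints Γ := by
    refine ⟨B * A * B⁻¹, mul_mem (mul_mem hBΓ hAΓ) (inv_mem hBΓ), ?_, ?_⟩
    · rw [trace_conj B A]; exact htrA
    · rw [hp, smul_smul]
      have : B * A * B⁻¹ * B = B * A := by group
      rw [this, mul_smul, hAz]
  -- p ≠ z
  have hpz : p ≠ z := by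
    intro hEq
    have h1 : (g * B * g⁻¹) • (g • z) = g • z := by
      rw [smul_smul]
      have : g * B * g⁻¹ * g = g * B := by group
      rw [this, mul_smul]
      rw [hp] at hEq
      rw [hEq]
    rw [hact] at h1
    have hcoe : (↑(g • z) : ℂ)
        = ((Real.cos (θ/2) : ℂ) * (↑(g • z) : ℂ) + Real.sin (θ/2))
          / (-(Real.sin (θ/2):ℂ) * (↑(g • z) : ℂ) + Real.cos (θ/2)) := by
      conv_lhs => rw [← h1]
      exact rot_coe _ _ R hR (g • z)
    have hzI : g • z = I := rot_fixed _ _ hsθ.ne' (g • z) hcoe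
    exact hzw (MulAction.injective g (hzI.trans hgw.symm))
  -- distance identities
  have hdzp : dist z p = dist (g • z) (R • (g • z)) := by
    rw [← dist_smul g z p]
    congr 1
    rw [hp, ← hact (g • z), smul_smul, smul_smul]
    congr 1
    group
  have hdzw : dist (g • z) I = dist z w := by
    rw [← hgw, dist_smul]
  -- displacement formula
  have hdisp : Real.sinh (dist z p / 2) = Real.sin (θ/2) * Real.sinh (dist z w) := by
    rw [hdzp, rot_displacement _ _ hsθ.ne' R hR (g • z), hdzw, abs_of_pos hsθ]
  -- minimality
  have hle : dist z w ≤ dist z p := hmin z hz p hpE (Ne.symm hpz)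
  have hd0 : 0 < dist z w := dist_pos.mpr hzw
  have hsh : 0 < Real.sinh (dist z w / 2) := Real.sinh_pos_iff.mpr (by positivity)
  have hmono : Real.sinh (dist z w / 2) ≤ Real.sinh (dist z p / 2) :=
    Real.sinh_le_sinh.mpr (by linarith)
  have hdouble : Real.sinh (dist z w)
      = 2 * Real.sinh (dist z w / 2) * Real.cosh (dist z w / 2) := by
    rw [show dist z w = 2 * (dist z w / 2) by ring, Real.sinh_two_mul]
    ring
  rw [hdisp, hdouble] at hmono
  have hkey : 1 ≤ 2 * Real.sin (θ/2) * Real.cosh (dist z w / 2) := by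
    have hch : 0 < Real.cosh (dist z w / 2) := Real.cosh_pos _
    nlinarith [hmono, hsh]
  rw [ge_iff_le, abs_of_pos hsθ, div_le_iff₀ hsθ]
  nlinarith [hkey]
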